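/- Let B be a complex Banach space, V ⊆ B an open set, R : V → B a Fréchet differentiable map, and f* ∈ V a fixed point of R (R f* = f*). Let S ⊆ B × B have first projection contained in V and be invariant, i.e. if (f, v) ∈ S then (R f, DR_f · v) ∈ S. Assume there exist N ∈ ℕ, λ < 1 and C > 0 such that for every (f, v) ∈ S one has ‖D(R^N)_f · v‖ ≤ λ ‖v‖, and ‖D(Rᵏ)_f · v‖ ≤ C ‖v‖ for all k ∈ ℕ. Let γ : [0,1] → V be a continuously differentiable path with γ(1) = f* and (γ(t), γ'(t)) ∈ S for every t ∈ [0,1]. Then there exists a constant C' > 0 (depending only on C, λ, N and sup_t ‖γ'(t)‖) such that ‖Rⁿ(γ(0)) − f*‖ ≤ C' λ^{⌊n/N⌋} for every n ∈ ℕ. -/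

import Mathlib

open scoped Topology

/-- The derivative of the `n`-th iterate of `R` at `f`, given by the chain rule:
`D(Rⁿ)_f = DR_{R^{n-1}f} ∘ ⋯ ∘ DR_f`, where `DR g` is the derivative of `R` at `g`. -/
noncomputable def iterDeriv {B : Type*} [NormedAddCommGroup B] [NormedSpace ℂ B]
    (R : B → B) (DR : B → B →L[ℂ] B) : ℕ → B → (B →L[ℂ] B)
  | 0, _ => ContinuousLinearMap.id ℂ B
  | n + 1, f => (DR (R^[n] f)).comp (iterDeriv R DR n f)

lemma iterDeriv_add {B : Type*} [NormedAddCommGroup B] [NormedSpace ℂ B]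
    (R : B → B) (DR : B → B →L[ℂ] B) (m n : ℕ) (f : B) :
    iterDeriv R DR (m + n) f = (iterDeriv R DR m (R^[n] f)).comp (iterDeriv R DR n f) := by
  induction m with
  | zero => simp [iterDeriv]
  | succ m ih =>
      have : m + 1 + n = (m + n) + 1 := by ring
      rw [this]
      simp only [iterDeriv, ih, Function.iterate_add_apply]
      rw [ContinuousLinearMap.comp_assoc]

lemma memS_iter {B : Type*} [NormedAddCommGroup B] [NormedSpace ℂ B]
    (R : B → B) (DR : B → B →L[ℂ] B) (S : Set (B × B))
    (hinv : ∀ f v, (f, v) ∈ S → (R f, DR f v) ∈ S)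
    (f v : B) (h : (f, v) ∈ S) (n : ℕ) :
    (R^[n] f, iterDeriv R DR n f v) ∈ S := by
  induction n with
  | zero => simpa [iterDeriv] using h
  | succ n ih =>
      have := hinv _ _ ih
      simpa [iterDeriv, Function.iterate_succ_apply'] using this

theorem stmt5 {B : Type*} [NormedAddCommGroup B] [NormedSpace ℂ B] [CompleteSpace B]
    -- `V ⊆ B` open, `R : V → B` Fréchet differentiable with derivative `DR f` at `f`
    (V : Set B) (hV : IsOpen V)
    (R : B → B) (DR : B → B →L[ℂ] B)
    (hdiff : ∀ f ∈ V, HasFDerivAt R (DR f) f)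
    -- `f*` is a fixed point of `R` in `V`
    (fstar : B) (hfstarV : fstar ∈ V) (hfix : R fstar = fstar)
    -- `S ⊆ B × B` has first projection contained in `V` and is invariant
    (S : Set (B × B)) (hSV : ∀ p ∈ S, p.1 ∈ V)
    (hinv : ∀ f v, (f, v) ∈ S → (R f, DR f v) ∈ S)
    -- contraction constants
    (N : ℕ) (lam : ℝ) (hlam0 : 0 ≤ lam) (hlam1 : lam < 1) (C : ℝ) (hC : 0 < C)
    (hcontr : ∀ f v, (f, v) ∈ S → ‖iterDeriv R DR N f v‖ ≤ lam * ‖v‖)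
    (hunif : ∀ f v, (f, v) ∈ S → ∀ k : ℕ, ‖iterDeriv R DR k f v‖ ≤ C * ‖v‖)
    -- `γ : [0,1] → V` is a C¹ path ending at `f*` whose tangent vectors lie in `S`
    (γ γ' : ℝ → B)
    (hγ : ∀ t ∈ Set.Icc (0 : ℝ) 1, HasDerivAt γ (γ' t) t)
    (hγ'cont : ContinuousOn γ' (Set.Icc (0 : ℝ) 1))
    (hγ1 : γ 1 = fstar)
    (hγS : ∀ t ∈ Set.Icc (0 : ℝ) 1, (γ t, γ' t) ∈ S) :
    ∃ C' > (0 : ℝ), ∀ n : ℕ, ‖R^[n] (γ 0) - fstar‖ ≤ C' * lam ^ (n / N) := by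
  -- bound on the speed of γ
  obtain ⟨M, hM⟩ := isCompact_Icc.exists_bound_of_continuousOn hγ'cont
  have hM0 : 0 ≤ M := le_trans (norm_nonneg _) (hM 0 (by norm_num))
  -- iterated contraction estimate
  have contract_pow : ∀ f v, (f, v) ∈ S → ∀ q : ℕ,
      ‖iterDeriv R DR (N * q) f v‖ ≤ lam ^ q * ‖v‖ := by
    intro f v h q
    induction q with
    | zero => simp [iterDeriv]
    | succ q ih =>
        have hNq : N * (q + 1) = N + N * q := by ring
        rw [hNq, iterDeriv_add]
        have hmem := memS_iter R DR S hinv f v h (N * q)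
        calc ‖iterDeriv R DR N (R^[N * q] f) (iterDeriv R DR (N * q) f v)‖
            ≤ lam * ‖iterDeriv R DR (N * q) f v‖ := hcontr _ _ hmem
          _ ≤ lam * (lam ^ q * ‖v‖) := by
              exact mul_le_mul_of_nonneg_left ih hlam0
          _ = lam ^ (q + 1) * ‖v‖ := by ring
  -- key estimate: for all (f, v) ∈ S and n, ‖D(Rⁿ) v‖ ≤ C λ^{n/N} ‖v‖
  have key : ∀ f v, (f, v) ∈ S → ∀ n : ℕ,
      ‖iterDeriv R DR n f v‖ ≤ C * lam ^ (n / N) * ‖v‖ := by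
    intro f v h n
    rcases Nat.eq_zero_or_pos N with hN | hN
    · simpa [hN] using hunif f v h n
    · have hdecomp : n = n % N + N * (n / N) := by
        rw [Nat.mod_add_div]
      conv_lhs => rw [hdecomp, iterDeriv_add]
      have hmem := memS_iter R DR S hinv f v h (N * (n / N))
      calc ‖iterDeriv R DR (n % N) (R^[N * (n / N)] f) (iterDeriv R DR (N * (n / N)) f v)‖
          ≤ C * ‖iterDeriv R DR (N * (n / N)) f v‖ := hunif _ _ hmem _
        _ ≤ C * (lam ^ (n / N) * ‖v‖) := by
            exact mul_le_mul_of_nonneg_left (contract_pow f v h _) hC.le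
        _ = C * lam ^ (n / N) * ‖v‖ := by ring
  refine ⟨C * (M + 1) + 1, by positivity, fun n => ?_⟩
  -- differentiability of the iterate along the path
  have hFD : ∀ t ∈ Set.Icc (0 : ℝ) 1,
      HasFDerivAt R^[n] (iterDeriv R DR n (γ t)) (γ t) := by
    intro t ht
    induction n with
    | zero => simpa [iterDeriv] using hasFDerivAt_id (γ t)
    | succ n ih =>
        have hmem := memS_iter R DR S hinv (γ t) (γ' t) (hγS t ht) n
        have hVmem : R^[n] (γ t) ∈ V := hSV _ hmem
        have : HasFDerivAt (R ∘ R^[n])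
            ((DR (R^[n] (γ t))).comp (iterDeriv R DR n (γ t))) (γ t) :=
          (hdiff _ hVmem).comp (γ t) ih
        rw [Function.iterate_succ']
        exact this
  have hderiv : ∀ t ∈ Set.Icc (0 : ℝ) 1,
      HasDerivAt (fun t => R^[n] (γ t)) (iterDeriv R DR n (γ t) (γ' t)) t := by
    intro t ht
    have := ((hFD t ht).restrictScalars ℝ).comp_hasDerivAt t (hγ t ht)
    simpa [Function.comp_def] using this
  have bound : ∀ t ∈ Set.Ico (0 : ℝ) 1,
      ‖iterDeriv R DR n (γ t) (γ' t)‖ ≤ C * lam ^ (n / N) * M := by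
    intro t ht
    have ht' : t ∈ Set.Icc (0 : ℝ) 1 := Set.Ico_subset_Icc_self ht
    calc ‖iterDeriv R DR n (γ t) (γ' t)‖
        ≤ C * lam ^ (n / N) * ‖γ' t‖ := key _ _ (hγS t ht') n
      _ ≤ C * lam ^ (n / N) * M := by
          exact mul_le_mul_of_nonneg_left (hM t ht') (by positivity)
  have mvt := norm_image_sub_le_of_norm_deriv_le_segment'
    (f := fun t => R^[n] (γ t)) (f' := fun t => iterDeriv R DR n (γ t) (γ' t))
    (fun t ht => (hderiv t ht).hasDerivWithinAt) bound 1 (Set.right_mem_Icc.2 zero_le_one)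
  have hfixn : R^[n] (γ 1) = fstar := by
    rw [hγ1]; exact Function.iterate_fixed hfix n
  have : ‖R^[n] (γ 0) - fstar‖ ≤ C * lam ^ (n / N) * M := by
    rw [← hfixn, norm_sub_rev]
    simpa using mvt
  calc ‖R^[n] (γ 0) - fstar‖ ≤ C * lam ^ (n / N) * M := this
    _ ≤ (C * (M + 1) + 1) * lam ^ (n / N) := by
        have hpow : (0 : ℝ) ≤ lam ^ (n / N) := by positivity
        nlinarith [hC.le, hM0, hpow]
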